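/- For every fixed t > 0, ρ(1 + t·ε)/ε → 2t as ε → 0⁺. In particular, for any sequence (ε_n) of positive reals tending to 0, ρ(1 + t·ε_n)/ε_n → 2t as n → ∞. -/

import Mathlib

open Real Filter Set

/-- `s + s^2/2 ≤ -log(1-s)` on `[0,1)`. -/
lemma aux_log_lower {s : ℝ} (h0 : 0 ≤ s) (h1 : s < 1) :
    s + s ^ 2 / 2 ≤ -Real.log (1 - s) := by
  set F : ℝ → ℝ := fun x => -Real.log (1 - x) - x - x ^ 2 / 2 with hF
  have hderiv : ∀ x ∈ Set.Ioo (0:ℝ) 1,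
      HasDerivAt F (1 / (1 - x) - 1 - x) x := by
    intro x hx
    have hne : (1 - x) ≠ 0 := by nlinarith [hx.1, hx.2]
    have h1' : HasDerivAt (fun y : ℝ => 1 - y) (-1) x := by
      simpa using (hasDerivAt_id x).const_sub (1:ℝ)
    have hlog : HasDerivAt (fun y : ℝ => Real.log (1 - y)) ((1 - x)⁻¹ * (-1)) x :=
      (Real.hasDerivAt_log hne).comp x h1'
    have hsq : HasDerivAt (fun y : ℝ => y ^ 2 / 2) (x) x := by
      have := (hasDerivAt_pow 2 x).div_const 2
      simpa using this
    have := (((hlog.neg).sub (hasDerivAt_id x)).sub hsq :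
      HasDerivAt (fun y => -Real.log (1 - y) - y - y ^ 2 / 2) _ x)
    rw [show (1 / (1 - x) - 1 - x) = -((1 - x)⁻¹ * -1) - 1 - x by ring]
    exact this
  have hmono : MonotoneOn F (Set.Ico (0:ℝ) 1) := by
    apply monotoneOn_of_deriv_nonneg (convex_Ico 0 1)
    · intro x hx
      have hne : (1 - x) ≠ 0 := by nlinarith [hx.1, hx.2]
      have hlogc : ContinuousAt (fun y : ℝ => Real.log (1 - y)) x :=
        (Real.continuousAt_log hne).comp ((continuous_const.sub continuous_id).continuousAt)
      exact ((hlogc.neg.sub continuous_id.continuousAt).sub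
        (((continuous_pow 2).div_const 2).continuousAt)).continuousWithinAt
    · rw [interior_Ico]
      intro x hx
      exact ((hderiv x hx).differentiableAt).differentiableWithinAt
    · rw [interior_Ico]
      intro x hx
      rw [(hderiv x hx).deriv]
      have h1x : 0 < 1 - x := by linarith [hx.2]
      have heq2 : 1 / (1 - x) - 1 - x = x ^ 2 / (1 - x) := by field_simp; ring
      rw [heq2]
      positivity
  rcases eq_or_lt_of_le h0 with h | h
  · simp [← h]
  · have := hmono (Set.mem_Ico.mpr ⟨le_refl 0, one_pos⟩) (Set.mem_Ico.mpr ⟨h0, h1⟩) h0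
    simp only [hF] at this
    simp at this
    linarith

/-- Key quantitative estimate. -/
lemma key_est (ρ : ℝ → ℝ)
    (hρ : ∀ c : ℝ, 1 < c →
      ρ c ∈ Set.Ioo (0 : ℝ) 1 ∧ 1 - ρ c - Real.exp (-(c * ρ c)) = 0)
    (t : ℝ) (ht : 0 < t) {ε : ℝ} (hε : 0 < ε) (hεs : ε ≤ 1 / (4 * t)) :
    |ρ (1 + t * ε) / ε - 2 * t| ≤ 16 * t ^ 2 * ε := by
  set c : ℝ := 1 + t * ε with hc
  have hc1 : 1 < c := by nlinarith
  obtain ⟨⟨hs0, hs1⟩, heq⟩ := hρ c hc1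
  set s : ℝ := ρ c with hs
  have h1s : 0 < 1 - s := by linarith
  -- c*s = -log(1-s)
  have hex : Real.exp (-(c * s)) = 1 - s := by linarith
  have hlog : Real.log (1 - s) = -(c * s) := by
    rw [← hex, Real.log_exp]
  -- lower bound: s + s^2/2 ≤ c*s
  have hlb : s + s ^ 2 / 2 ≤ c * s := by
    have := aux_log_lower hs0.le hs1
    rw [hlog] at this; linarith
  -- s ≤ 2 t ε
  have hsle : s ≤ 2 * (c - 1) := by nlinarith
  have hsle' : s ≤ 2 * t * ε := by rw [hc] at hsle; linarith
  have hshalf : s ≤ 1 / 2 := by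
    have h4 : ε * (4 * t) ≤ 1 := by
      rw [le_div_iff₀ (by positivity)] at hεs; exact hεs
    nlinarith
  -- two-sided bound from Taylor
  have habs := Real.abs_log_sub_add_sum_range_le (x := s) (by rw [abs_of_pos hs0]; exact hs1) 2
  have hsum : (∑ i ∈ Finset.range 2, s ^ (i + 1) / ((i:ℝ) + 1)) = s + s ^ 2 / 2 := by
    norm_num [Finset.sum_range_succ]
  rw [hsum, hlog, abs_of_pos hs0] at habs
  -- |s/2 - (c-1)| ≤ s^2/(1-s)
  have hkey : |s / 2 - (c - 1)| ≤ s ^ 2 / (1 - s) := by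
    have hid : s + s ^ 2 / 2 + -(c * s) = (s / 2 - (c - 1)) * s := by ring
    rw [hid, abs_mul, abs_of_pos hs0] at habs
    have hpow : s ^ (2 + 1) / (1 - s) = s ^ 2 / (1 - s) * s := by
      field_simp
    rw [hpow] at habs
    exact le_of_mul_le_mul_right habs hs0
  -- conclude
  have h2 : s / ε - 2 * t = (2 / ε) * (s / 2 - (c - 1)) := by
    rw [hc]; field_simp; ring
  have h3 : s ^ 2 / (1 - s) ≤ 2 * s ^ 2 := by
    rw [div_le_iff₀ h1s]
    nlinarith
  rw [h2, abs_mul, abs_of_pos (show (0:ℝ) < 2 / ε by positivity)]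
  calc (2 / ε) * |s / 2 - (c - 1)| ≤ (2 / ε) * (2 * ((2 * t * ε) * (2 * t * ε))) := by
        apply mul_le_mul_of_nonneg_left _ (by positivity)
        have hsq : s ^ 2 ≤ (2 * t * ε) * (2 * t * ε) := by nlinarith
        linarith [hkey.trans h3]
    _ = 16 * t ^ 2 * ε := by field_simp; ring

/-- For every fixed `t > 0`, `ρ(1 + t*ε)/ε → 2t` as `ε → 0⁺`.  In particular, for any
sequence `(ε_n)` of positive reals tending to `0`, `ρ(1 + t*ε_n)/ε_n → 2t` as `n → ∞`. -/
theorem rho_barely_supercritical_asymptotics (ρ : ℝ → ℝ)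
    (hρ : ∀ c : ℝ, 1 < c →
      ρ c ∈ Set.Ioo (0 : ℝ) 1 ∧ 1 - ρ c - Real.exp (-(c * ρ c)) = 0)
    (t : ℝ) (ht : 0 < t) :
    Filter.Tendsto (fun ε : ℝ => ρ (1 + t * ε) / ε)
      (nhdsWithin 0 (Set.Ioi 0)) (nhds (2 * t)) ∧
    ∀ ε : ℕ → ℝ, (∀ n, 0 < ε n) → Filter.Tendsto ε Filter.atTop (nhds 0) →
      Filter.Tendsto (fun n : ℕ => ρ (1 + t * ε n) / ε n) Filter.atTop (nhds (2 * t)) := by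
  have main : Filter.Tendsto (fun ε : ℝ => ρ (1 + t * ε) / ε)
      (nhdsWithin 0 (Set.Ioi 0)) (nhds (2 * t)) := by
    rw [← tendsto_sub_nhds_zero_iff]
    apply squeeze_zero_norm' (a := fun ε => 16 * t ^ 2 * ε)
    · have h1 : ∀ᶠ ε in nhdsWithin (0:ℝ) (Set.Ioi 0), ε ∈ Set.Ioi (0:ℝ) :=
        self_mem_nhdsWithin
      have h2 : ∀ᶠ ε in nhdsWithin (0:ℝ) (Set.Ioi 0), ε < 1 / (4 * t) :=
        eventually_nhdsWithin_of_eventually_nhds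
          (eventually_of_mem (Iio_mem_nhds (by positivity)) fun x hx => hx)
      filter_upwards [h1, h2] with ε hε1 hε2
      exact key_est ρ hρ t ht hε1 hε2.le
    · have : Filter.Tendsto (fun ε : ℝ => 16 * t ^ 2 * ε) (nhds 0) (nhds 0) := by
        simpa using (tendsto_id (x := nhds (0:ℝ))).const_mul (16 * t ^ 2)
      exact this.mono_left nhdsWithin_le_nhds
  refine ⟨main, fun ε hpos hlim => ?_⟩
  exact main.comp
    (tendsto_nhdsWithin_of_tendsto_nhds_of_eventually_within ε hlim
      (Filter.Eventually.of_forall hpos))
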